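/- Under Assumption A, for every η > 0 and every 0 < σ < s, the expected distortion of the nonlinear projection associated with the outer leaves Λ_η of the subtree 𝒯_η satisfies ℰ[P_{Λ_η}] ≤ c_σ · η^{4σ/(2σ+1)}, where c_σ > 0 is a constant depending only on a, b, s, C₁, C₂ and σ. -/

import Mathlib

open MeasureTheory Set ProbabilityTheory
open scoped BigOperators ENNReal NNReal

attribute [local instance] Classical.propDecidable

noncomputable section

/-- Euclidean space `ℝ^D`. -/
abbrev Euc (D : ℕ) : Type := EuclideanSpace ℝ (Fin D)

/-- A partition tree on a subset `X` of `ℝ^D`, with branching number at most `a`.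
Cells are abstract nodes; `cset I` is the subset of `ℝ^D` associated with the cell `I`,
`depth I` its depth, `parent I` its parent. -/
structure PartitionTree (D : ℕ) (X : Set (Euc D)) (a : ℕ) : Type 1 where
  Cell : Type
  cellCountable : Countable Cell
  cset : Cell → Set (Euc D)
  depth : Cell → ℕ
  parent : Cell → Cell
  root : Cell
  root_cset : cset root = X
  depth_root : depth root = 0
  parent_root : parent root = root
  eq_root_of_depth_eq_zero : ∀ I, depth I = 0 → I = root
  depth_parent : ∀ I, I ≠ root → depth (parent I) + 1 = depth I
  level_finite : ∀ j : ℕ, {I | depth I = j}.Finite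
  level_cover : ∀ j : ℕ, ⋃ I ∈ {I | depth I = j}, cset I = X
  level_disjoint : ∀ I J, depth I = depth J → I ≠ J → Disjoint (cset I) (cset J)
  cset_measurable : ∀ I, MeasurableSet (cset I)
  cset_eq_iUnion_children : ∀ I, cset I = ⋃ J ∈ {J | parent J = I ∧ J ≠ root}, cset J
  ncard_children_le : ∀ I, {J | parent J = I ∧ J ≠ root}.ncard ≤ a

namespace PartitionTree

variable {D : ℕ} {X : Set (Euc D)} {a : ℕ} (T : PartitionTree D X a)

/-- The children of a cell. -/
def children (I : T.Cell) : Set T.Cell := {J | T.parent J = I ∧ J ≠ T.root}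

/-- `descend k I` is the set `𝒞^k(I)` of `k`-th generation descendants of `I`. -/
def descend : ℕ → T.Cell → Set T.Cell
  | 0, I => {I}
  | k + 1, I => ⋃ J ∈ descend k I, T.children J

/-- A subtree: a family of cells containing the parent of each of its cells. -/
def IsSubtree (S : Set T.Cell) : Prop := ∀ I ∈ S, T.parent I ∈ S

/-- The outer leaves `Λ(𝒯)` of a subtree `𝒯`. -/
def outerLeaves (S : Set T.Cell) : Set T.Cell := {I | I ∉ S ∧ T.parent I ∈ S}

end PartitionTree

/-- The essential diameter of a set `I` with respect to the measure `ρ`: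
`ediam ρ I = inf { diam (I \ J) | J ⊆ I Borel, ρ J = 0 }`. -/
def ediam {D : ℕ} (ρ : Measure (Euc D)) (I : Set (Euc D)) : ℝ :=
  ⨅ J : {J : Set (Euc D) // MeasurableSet J ∧ J ⊆ I ∧ ρ J = 0},
    Metric.diam (I \ (J : Set (Euc D)))

namespace PartitionTree

variable {D : ℕ} {X : Set (Euc D)} {a : ℕ} (T : PartitionTree D X a)
  (ρ : Measure (Euc D)) (xstar : T.Cell → Euc D)

/-- The (population) center of mass `c_I` of a cell: `ρ(I)⁻¹ ∫_I x dρ(x)` if `ρ(I) > 0`,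
and the arbitrary fixed point `xstar I` otherwise. -/
def center (I : T.Cell) : Euc D :=
  if ρ (T.cset I) ≠ 0 then (ρ (T.cset I)).toReal⁻¹ • ∫ x in T.cset I, x ∂ρ else xstar I

/-- The local expected distortion `ℰ_I = ∫_I ‖x - c_I‖² dρ(x)`. -/
def cellErr (I : T.Cell) : ℝ := ∫ x in T.cset I, ‖x - T.center ρ xstar I‖ ^ 2 ∂ρ

/-- `ε_I² = ℰ_I - ∑_{J ∈ 𝒞(I)} ℰ_J`. -/
def epsSq (I : T.Cell) : ℝ :=
  T.cellErr ρ xstar I - ∑ᶠ J ∈ T.children I, T.cellErr ρ xstar J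

/-- `ε_I ≥ 0`, defined by `ε_I² = ℰ_I - ∑_{J ∈ 𝒞(I)} ℰ_J`. -/
def eps (I : T.Cell) : ℝ := Real.sqrt (T.epsSq ρ xstar I)

/-- The subtree `𝒯_η`. -/
def Teta (η : ℝ) : Set T.Cell :=
  if ∀ I, T.eps ρ xstar I < η then {T.root}
  else {I | ∃ k, ∃ J ∈ T.descend k I, η ≤ T.eps ρ xstar J}

/-- The nonlinear projection `P_Λ(x) = ∑_{I ∈ Λ} c_I 1_I(x)` associated with a family of
cells `Λ` and code vectors `c`. -/
def proj (c : T.Cell → Euc D) (Λ : Set T.Cell) (x : Euc D) : Euc D :=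
  ∑ᶠ I ∈ Λ, (T.cset I).indicator (fun _ => c I) x

variable {n : ℕ}

/-- The number `n_I` of sample points lying in the cell `I`. -/
def empCount (x : Fin n → Euc D) (I : T.Cell) : ℕ := {i | x i ∈ T.cset I}.ncard

/-- The empirical center of mass `ĉ_I` of a cell: the average of the sample points lying in
`I` if there are any, and the arbitrary fixed point `xhat I` otherwise. -/
def empCenter (xhat : T.Cell → Euc D) (x : Fin n → Euc D) (I : T.Cell) : Euc D :=
  if T.empCount x I ≠ 0 then
    ((T.empCount x I : ℝ))⁻¹ • ∑ᶠ i ∈ {i : Fin n | x i ∈ T.cset I}, x i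
  else xhat I

/-- The empirical local distortion `Ê_I = n⁻¹ ∑_{i : X_i ∈ I} ‖X_i - ĉ_I‖²`. -/
def empErr (xhat : T.Cell → Euc D) (x : Fin n → Euc D) (I : T.Cell) : ℝ :=
  (n : ℝ)⁻¹ * ∑ᶠ i ∈ {i : Fin n | x i ∈ T.cset I}, ‖x i - T.empCenter xhat x I‖ ^ 2

/-- `ε̂_I² = Ê_I - ∑_{J ∈ 𝒞(I)} Ê_J`. -/
def empEpsSq (xhat : T.Cell → Euc D) (x : Fin n → Euc D) (I : T.Cell) : ℝ :=
  T.empErr xhat x I - ∑ᶠ J ∈ T.children I, T.empErr xhat x J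

/-- `ε̂_I ≥ 0`, defined by `ε̂_I² = Ê_I - ∑_{J ∈ 𝒞(I)} Ê_J`. -/
def empEps (xhat : T.Cell → Euc D) (x : Fin n → Euc D) (I : T.Cell) : ℝ :=
  Real.sqrt (T.empEpsSq xhat x I)

/-- The empirical subtree `T̂_η`, truncated at depth `jn`. -/
def empTeta (xhat : T.Cell → Euc D) (x : Fin n → Euc D) (jn : ℕ) (η : ℝ) : Set T.Cell :=
  if ∀ I, T.depth I ≤ jn → T.empEps xhat x I < η then {T.root}
  else {I | ∃ k, ∃ J ∈ T.descend k I, T.depth J ≤ jn ∧ η ≤ T.empEps xhat x J}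

end PartitionTree

/-- Assumption A: `ediam(I) ≤ C₁ ρ(I)^s` and `ediam(I) ≤ C₂ b^{-j_I}` for every cell `I`. -/
def AssumptionA {D : ℕ} {X : Set (Euc D)} {a : ℕ} (T : PartitionTree D X a)
    (ρ : Measure (Euc D)) (b s C₁ C₂ : ℝ) : Prop :=
  ∀ I : T.Cell,
    ediam ρ (T.cset I) ≤ C₁ * (ρ (T.cset I)).toReal ^ s ∧
    ediam ρ (T.cset I) ≤ C₂ * b ^ (-(T.depth I : ℝ))

namespace PartitionTree
variable {D : ℕ} {X : Set (Euc D)} {a : ℕ} (T : PartitionTree D X a)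

lemma depth_child {I J : T.Cell} (h : J ∈ T.children I) : T.depth J = T.depth I + 1 := by
  rw [← T.depth_parent J h.2, h.1]

lemma children_finite (I : T.Cell) : (T.children I).Finite :=
  (T.level_finite (T.depth I + 1)).subset (fun J hJ => T.depth_child hJ)

lemma mem_descend_depth {k : ℕ} {I J : T.Cell} (h : J ∈ T.descend k I) :
    T.depth J = T.depth I + k := by
  induction k generalizing J with
  | zero => simp [descend] at h; simp [h]
  | succ k ih =>
    simp only [descend, mem_iUnion] at h
    obtain ⟨J', hJ', hJ⟩ := h
    rw [T.depth_child hJ, ih hJ']; ring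

lemma descend_finite (k : ℕ) (I : T.Cell) : (T.descend k I).Finite :=
  (T.level_finite (T.depth I + k)).subset (fun J hJ => T.mem_descend_depth hJ)

lemma parent_iter_of_mem_descend {k : ℕ} {I J : T.Cell} (h : J ∈ T.descend k I) :
    T.parent^[k] J = I := by
  induction k generalizing J with
  | zero => simpa [descend] using h
  | succ k ih =>
    simp only [descend, mem_iUnion] at h
    obtain ⟨J', hJ', hJ⟩ := h
    rw [Function.iterate_succ_apply, hJ.1]
    exact ih hJ'

lemma descend_succ (k : ℕ) (I : T.Cell) :
    T.descend (k + 1) I = ⋃ J ∈ T.descend k I, T.children J := rfl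

lemma mem_descend_succ {k : ℕ} {I J J' : T.Cell} (hJ' : J' ∈ T.descend k I)
    (hJ : J ∈ T.children J') : J ∈ T.descend (k + 1) I := by
  rw [descend_succ]; exact mem_biUnion hJ' hJ

lemma self_mem_descend_root (I : T.Cell) : I ∈ T.descend (T.depth I) T.root := by
  generalize hd : T.depth I = k
  induction k generalizing I with
  | zero => simp [descend, T.eq_root_of_depth_eq_zero I hd]
  | succ k ih =>
    have hne : I ≠ T.root := fun h => by simp [h, T.depth_root] at hd
    have hp : T.depth (T.parent I) = k := by
      have := T.depth_parent I hne; omega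
    exact T.mem_descend_succ (ih (T.parent I) hp) ⟨rfl, hne⟩

lemma cset_subset_X (I : T.Cell) : T.cset I ⊆ X := by
  intro x hx
  have := T.level_cover (T.depth I)
  rw [← this]
  exact mem_biUnion rfl hx

lemma cset_child_subset {I J : T.Cell} (h : J ∈ T.children I) : T.cset J ⊆ T.cset I := by
  rw [T.cset_eq_iUnion_children I]
  exact subset_biUnion_of_mem h

lemma subtree_parent_iter {S : Set T.Cell} (hS : T.IsSubtree S) {I : T.Cell} (hI : I ∈ S)
    (k : ℕ) : T.parent^[k] I ∈ S := by
  induction k with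
  | zero => exact hI
  | succ k ih => rw [Function.iterate_succ_apply']; exact hS _ ih

lemma descend_subset_descend_parent {I : T.Cell} (hI : I ≠ T.root) (k : ℕ) :
    T.descend k I ⊆ T.descend (k + 1) (T.parent I) := by
  induction k with
  | zero =>
    intro J hJ
    simp only [descend, mem_singleton_iff] at hJ
    subst hJ
    exact T.mem_descend_succ (show T.parent J ∈ T.descend 0 (T.parent J) from rfl) ⟨rfl, hI⟩
  | succ k ih =>
    intro J hJ
    rw [descend_succ] at hJ
    obtain ⟨J', hJ', hJ⟩ := mem_iUnion₂.mp hJ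
    exact T.mem_descend_succ (ih hJ') hJ







lemma self_mem_descend_zero (I : T.Cell) : I ∈ T.descend 0 I := rfl

lemma depth_parent_iter {I : T.Cell} {m : ℕ} (hm : m ≤ T.depth I) :
    T.depth (T.parent^[m] I) = T.depth I - m := by
  induction m with
  | zero => simp
  | succ m ih =>
    have h1 : T.depth (T.parent^[m] I) = T.depth I - m := ih (by omega)
    have hne : T.parent^[m] I ≠ T.root := by
      intro h
      rw [h, T.depth_root] at h1
      omega
    rw [Function.iterate_succ_apply']
    have := T.depth_parent _ hne
    omega

lemma cset_subset_parent_iter {I : T.Cell} {m : ℕ} (hm : m ≤ T.depth I) :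
    T.cset I ⊆ T.cset (T.parent^[m] I) := by
  induction m with
  | zero => simp
  | succ m ih =>
    have h1 : T.depth (T.parent^[m] I) = T.depth I - m := T.depth_parent_iter (by omega)
    have hne : T.parent^[m] I ≠ T.root := by
      intro h
      rw [h, T.depth_root] at h1
      omega
    rw [Function.iterate_succ_apply']
    refine (ih (by omega)).trans ?_
    rw [T.cset_eq_iUnion_children (T.parent (T.parent^[m] I))]
    exact subset_biUnion_of_mem (show _ ∈ {J | T.parent J = _ ∧ J ≠ T.root} from ⟨rfl, hne⟩)

lemma not_mem_of_mem_descend_of_not_mem {S : Set T.Cell} (hS : T.IsSubtree S) {I J : T.Cell}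
    {k : ℕ} (hI : I ∉ S) (hJ : J ∈ T.descend k I) : J ∉ S := fun h => by
  have := T.subtree_parent_iter hS h k
  rw [T.parent_iter_of_mem_descend hJ] at this
  exact hI this

/-- Distinct outer leaves of a subtree have disjoint cells. -/
lemma outerLeaves_disjoint {S : Set T.Cell} (hS : T.IsSubtree S) {I J : T.Cell}
    (hI : I ∈ T.outerLeaves S) (hJ : J ∈ T.outerLeaves S) (hne : I ≠ J) :
    Disjoint (T.cset I) (T.cset J) := by
  rcases eq_or_ne (T.depth I) (T.depth J) with h | h
  · exact T.level_disjoint I J h hne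
  · rw [Set.disjoint_left]
    intro x hxI hxJ
    -- wlog: show impossible that x in both
    have key : ∀ I J : T.Cell, I ∈ T.outerLeaves S → J ∈ T.outerLeaves S →
        T.depth I < T.depth J → x ∈ T.cset I → x ∈ T.cset J → False := by
      intro I J hI hJ hd hxI hxJ
      set m := T.depth J - T.depth I with hm
      have hm1 : 1 ≤ m := by omega
      have hmle : m ≤ T.depth J := by omega
      have hK : T.depth (T.parent^[m] J) = T.depth I := by
        rw [T.depth_parent_iter hmle]; omega
      have hxK : x ∈ T.cset (T.parent^[m] J) := T.cset_subset_parent_iter hmle hxJ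
      have hKI : T.parent^[m] J = I := by
        by_contra hne'
        exact (T.level_disjoint _ I hK hne').le_bot ⟨hxK, hxI⟩
      have : T.parent^[m] J ∈ S := by
        have hrw : T.parent^[m] J = T.parent^[m - 1] (T.parent J) := by
          conv_lhs => rw [show m = (m - 1) + 1 by omega]
          rw [Function.iterate_succ_apply]
        rw [hrw]
        exact T.subtree_parent_iter hS hJ.2 (m - 1)
      rw [hKI] at this
      exact hI.1 this
    rcases lt_or_gt_of_ne h with h' | h'
    · exact key I J hI hJ h' hxI hxJ
    · exact key J I hJ hI h' hxJ hxI

/-- Every point of `X` belongs to the cell of some outer leaf of a finite subtree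
containing the root. -/
lemma exists_outerLeaf_mem {S : Set T.Cell} (hS : T.IsSubtree S) (hfin : S.Finite)
    (hroot : T.root ∈ S) {x : Euc D} (hx : x ∈ X) :
    ∃ I ∈ T.outerLeaves S, x ∈ T.cset I := by
  obtain ⟨d, hd⟩ : ∃ d, ∀ I ∈ S, T.depth I ≤ d := by
    rcases (hfin.image T.depth).bddAbove with ⟨d, hdmem⟩
    exact ⟨d, fun I hI => hdmem ⟨I, hI, rfl⟩⟩
  have step : ∀ I : T.Cell, x ∈ T.cset I → ∃ J ∈ T.children I, x ∈ T.cset J := by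
    intro I hxI
    rw [T.cset_eq_iUnion_children I] at hxI
    obtain ⟨J, hJ, hxJ⟩ := mem_iUnion₂.mp hxI
    exact ⟨J, hJ, hxJ⟩
  have main : ∀ k : ℕ, (∃ I, x ∈ T.cset I ∧ T.depth I = k ∧ I ∈ S) ∨
      (∃ L ∈ T.outerLeaves S, x ∈ T.cset L) := by
    intro k
    induction k with
    | zero => exact Or.inl ⟨T.root, by rwa [T.root_cset], T.depth_root, hroot⟩
    | succ k ih =>
      rcases ih with ⟨I, hxI, hdI, hIS⟩ | h
      · obtain ⟨J, hJ, hxJ⟩ := step I hxI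
        by_cases hJS : J ∈ S
        · exact Or.inl ⟨J, hxJ, by rw [← T.depth_parent J hJ.2, hJ.1, hdI], hJS⟩
        · exact Or.inr ⟨J, ⟨hJS, by rw [hJ.1]; exact hIS⟩, hxJ⟩
      · exact Or.inr h
  rcases main (d + 1) with ⟨I, _, hdI, hIS⟩ | h
  · exact absurd (hd I hIS) (by omega)
  · exact h

variable (ρ : Measure (Euc D)) (xstar : T.Cell → Euc D) {η : ℝ}

lemma root_mem_Teta : T.root ∈ T.Teta ρ xstar η := by
  rw [Teta]
  split
  · exact rfl
  · next h =>
    push_neg at h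
    obtain ⟨I, hI⟩ := h
    exact ⟨T.depth I, I, T.self_mem_descend_root I, hI⟩


lemma isSubtree_Teta : T.IsSubtree (T.Teta ρ xstar η) := by
  rw [Teta]
  split
  · intro I hI
    simp only [mem_singleton_iff] at hI
    simp [hI, T.parent_root]
  · intro I hI
    obtain ⟨k, J, hJ, hJη⟩ := hI
    by_cases hI0 : I = T.root
    · subst hI0
      rw [T.parent_root]
      exact ⟨k, J, hJ, hJη⟩
    · exact ⟨k + 1, J, T.descend_subset_descend_parent hI0 k hJ, hJη⟩


lemma eps_lt_of_not_mem_Teta {I : T.Cell} (h : I ∉ T.Teta ρ xstar η) :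
    T.eps ρ xstar I < η := by
  rw [Teta] at h
  by_cases hall : ∀ I, T.eps ρ xstar I < η
  · exact hall I
  · rw [if_neg hall] at h
    simp only [mem_setOf_eq] at h
    push_neg at h
    by_contra hle
    exact absurd (h 0 I (T.self_mem_descend_zero I)) (not_lt.mpr (le_of_not_gt hle))

lemma Teta_finite {j₀ : ℕ} (hj : ∀ I, η ≤ T.eps ρ xstar I → T.depth I ≤ j₀) :
    (T.Teta ρ xstar η).Finite := by
  rw [Teta]
  split
  · exact finite_singleton _
  · have : {I : T.Cell | ∃ k, ∃ J ∈ T.descend k I, η ≤ T.eps ρ xstar J} ⊆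
        {I | T.depth I ≤ j₀} := by
      rintro I ⟨k, J, hJ, hJη⟩
      have h1 := T.mem_descend_depth hJ
      have h2 := hj J hJη
      simp only [mem_setOf_eq]
      omega
    refine Finite.subset ?_ this
    have : {I : T.Cell | T.depth I ≤ j₀} ⊆ ⋃ j ∈ Finset.range (j₀ + 1), {I | T.depth I = j} := by
      intro I hI
      simp only [mem_setOf_eq] at hI
      exact mem_biUnion (Finset.mem_range.mpr (by omega)) rfl
    exact Finite.subset (Set.Finite.biUnion (Finset.range (j₀+1)).finite_toSet
      (fun j _ => T.level_finite j)) this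


lemma outerLeaves_finite {S : Set T.Cell} (hfin : S.Finite) :
    (T.outerLeaves S).Finite := by
  have : T.outerLeaves S ⊆ ⋃ I ∈ S, T.children I := by
    rintro J ⟨hJ1, hJ2⟩
    refine mem_biUnion hJ2 ⟨rfl, ?_⟩
    intro h
    subst h
    rw [T.parent_root] at hJ2
    exact hJ1 hJ2
  exact Finite.subset (Set.Finite.biUnion hfin (fun I _ => T.children_finite I)) this


end PartitionTree

open scoped RealInnerProductSpace

lemma mem_X_norm_le {D : ℕ} {X : Set (Euc D)} (h0X : (0 : Euc D) ∈ X)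
    (hXb : Bornology.IsBounded X) (hXd : Metric.diam X ≤ 1) {x : Euc D} (hx : x ∈ X) :
    ‖x‖ ≤ 1 := by
  calc ‖x‖ = dist x 0 := (dist_zero_right x).symm
  _ ≤ Metric.diam X := Metric.dist_le_diam_of_mem hXb hx h0X
  _ ≤ 1 := hXd

lemma ae_mem_X {D : ℕ} {X : Set (Euc D)} {ρ : Measure (Euc D)} (hXc : ρ Xᶜ = 0) :
    ∀ᵐ x ∂ρ, x ∈ X := by
  rw [ae_iff]
  exact hXc

lemma integrable_sq_dist {D : ℕ} {ρ : Measure (Euc D)} [IsFiniteMeasure ρ]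
    (hae : ∀ᵐ x ∂ρ, ‖x‖ ≤ 1) (c : Euc D) (hc : ‖c‖ ≤ 1) :
    Integrable (fun x => ‖x - c‖ ^ 2) ρ := by
  refine Integrable.mono' (integrable_const 4) ?_ ?_
  · exact Continuous.aestronglyMeasurable (by continuity)
  · filter_upwards [hae] with x hx
    have h2 : ‖x - c‖ ≤ 2 := (norm_sub_le x c).trans (by linarith)
    have h0 : (0:ℝ) ≤ ‖x - c‖ := norm_nonneg _
    calc ‖‖x - c‖ ^ 2‖ = ‖x - c‖ ^ 2 := Real.norm_of_nonneg (by positivity)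
    _ ≤ 4 := by nlinarith

lemma integrable_id_ae {D : ℕ} {ρ : Measure (Euc D)} [IsFiniteMeasure ρ]
    (hae : ∀ᵐ x ∂ρ, ‖x‖ ≤ 1) : Integrable (fun x : Euc D => x) ρ := by
  refine Integrable.mono' (integrable_const 1) ?_ ?_
  · exact Continuous.aestronglyMeasurable continuous_id
  · exact hae

namespace PartitionTree

variable {D : ℕ} {X : Set (Euc D)} {a : ℕ} (T : PartitionTree D X a)
  {ρ : Measure (Euc D)} {xstar : T.Cell → Euc D}

lemma norm_center_le [IsFiniteMeasure ρ] (hae : ∀ᵐ x ∂ρ, ‖x‖ ≤ 1)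
    (hxs : ∀ I, ‖xstar I‖ ≤ 1) (I : T.Cell) : ‖T.center ρ xstar I‖ ≤ 1 := by
  rw [center]
  split
  · next h =>
    have hfin : ρ (T.cset I) < ∞ := measure_lt_top ρ _
    have ht : 0 < (ρ (T.cset I)).toReal := ENNReal.toReal_pos h hfin.ne
    have h1 : ‖∫ x in T.cset I, x ∂ρ‖ ≤ 1 * (ρ (T.cset I)).toReal :=
      norm_setIntegral_le_of_norm_le_const_ae hfin (ae_restrict_of_ae hae)
    rw [norm_smul, norm_inv, Real.norm_of_nonneg ENNReal.toReal_nonneg]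
    rw [one_mul] at h1
    calc (ρ (T.cset I)).toReal⁻¹ * ‖∫ x in T.cset I, x ∂ρ‖
        ≤ (ρ (T.cset I)).toReal⁻¹ * (ρ (T.cset I)).toReal := by
          exact mul_le_mul_of_nonneg_left h1 (by positivity)
    _ = 1 := inv_mul_cancel₀ ht.ne'
  · exact hxs I

lemma cellErr_nonneg (I : T.Cell) : 0 ≤ T.cellErr ρ xstar I :=
  integral_nonneg fun x => by positivity

lemma cellErr_eq_zero (h : ρ (T.cset I) = 0) {I : T.Cell} : True := trivial

end PartitionTree

lemma ediam_nonneg {D : ℕ} (ρ : Measure (Euc D)) (s : Set (Euc D)) : 0 ≤ ediam ρ s :=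
  Real.iInf_nonneg fun _ => Metric.diam_nonneg

namespace PartitionTree

variable {D : ℕ} {X : Set (Euc D)} {a : ℕ} (T : PartitionTree D X a)
  {ρ : Measure (Euc D)} {xstar : T.Cell → Euc D}

/-- `ℰ_I ≤ ediam(I)² ρ(I)`. -/
lemma cellErr_le_ediam_sq [IsFiniteMeasure ρ] (hae : ∀ᵐ x ∂ρ, ‖x‖ ≤ 1)
    (hxs : ∀ I, ‖xstar I‖ ≤ 1) (hXb : Bornology.IsBounded X) (I : T.Cell) :
    T.cellErr ρ xstar I ≤ (ediam ρ (T.cset I)) ^ 2 * (ρ (T.cset I)).toReal := by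
  set s := T.cset I with hs
  by_cases hz : ρ s = 0
  · have : T.cellErr ρ xstar I = 0 := by
      rw [cellErr, ← hs, Measure.restrict_eq_zero.mpr hz, integral_zero_measure]
    rw [this, hz]
    simp
  -- main case
  have hfin : ρ s < ∞ := measure_lt_top ρ _
  have ht : 0 < (ρ s).toReal := ENNReal.toReal_pos hz hfin.ne
  have hcenter : T.center ρ xstar I = (ρ s).toReal⁻¹ • ∫ x in s, x ∂ρ := by
    rw [center, if_pos]; exact hz
  have hEnonneg := T.cellErr_nonneg (ρ := ρ) (xstar := xstar) I
  -- the claim for each admissible null set J'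
  have claim : ∀ J : {J : Set (Euc D) // MeasurableSet J ∧ J ⊆ s ∧ ρ J = 0},
      T.cellErr ρ xstar I ≤ (Metric.diam (s \ (J : Set (Euc D)))) ^ 2 * (ρ s).toReal := by
    rintro ⟨J, hJm, hJs, hJ0⟩
    set d := Metric.diam (s \ J) with hd
    have hdnn : 0 ≤ d := Metric.diam_nonneg
    have hbdd : Bornology.IsBounded (s \ J) :=
      hXb.subset ((diff_subset).trans (T.cset_subset_X I))
    -- pointwise bound on s \ J
    have hpt : ∀ x ∈ s \ J, ‖x - T.center ρ xstar I‖ ≤ d := by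
      intro x hx
      have hintid : IntegrableOn (fun y : Euc D => y) s ρ :=
        (integrable_id_ae hae).integrableOn
      have hxc : x - T.center ρ xstar I = (ρ s).toReal⁻¹ • ∫ y in s, (x - y) ∂ρ := by
        rw [integral_sub (integrableOn_const (C := x) hfin.ne) hintid, integral_const,
          measureReal_restrict_apply_univ, measureReal_def, smul_sub, smul_smul, hcenter,
          inv_mul_cancel₀ ht.ne', one_smul]
      have hnorm : ‖∫ y in s, (x - y) ∂ρ‖ ≤ d * (ρ s).toReal := by
        refine norm_setIntegral_le_of_norm_le_const_ae hfin ?_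
        have h1 : ∀ᵐ y ∂ρ.restrict s, y ∈ s := ae_restrict_mem (T.cset_measurable I)
        have h2 : ∀ᵐ y ∂ρ.restrict s, y ∉ J :=
          ae_restrict_of_ae (by rw [ae_iff]; simpa using hJ0)
        filter_upwards [h1, h2] with y hy1 hy2
        rw [← dist_eq_norm]
        exact Metric.dist_le_diam_of_mem hbdd hx ⟨hy1, hy2⟩
      rw [hxc, norm_smul, norm_inv, Real.norm_of_nonneg ENNReal.toReal_nonneg]
      calc (ρ s).toReal⁻¹ * ‖∫ y in s, (x - y) ∂ρ‖ ≤ (ρ s).toReal⁻¹ * (d * (ρ s).toReal) :=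
        mul_le_mul_of_nonneg_left hnorm (by positivity)
      _ = d := by field_simp
    -- integrate
    have hint : Integrable (fun x => ‖x - T.center ρ xstar I‖ ^ 2) (ρ.restrict s) :=
      (integrable_sq_dist hae _ (T.norm_center_le hae hxs I)).integrableOn
    have hb : (fun x => ‖x - T.center ρ xstar I‖ ^ 2) ≤ᵐ[ρ.restrict s] fun _ => d ^ 2 := by
      have h1 : ∀ᵐ y ∂ρ.restrict s, y ∈ s := ae_restrict_mem (T.cset_measurable I)
      have h2 : ∀ᵐ y ∂ρ.restrict s, y ∉ J :=
        ae_restrict_of_ae (by rw [ae_iff]; simpa using hJ0)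
      filter_upwards [h1, h2] with y hy1 hy2
      have := hpt y ⟨hy1, hy2⟩
      have h0 : (0:ℝ) ≤ ‖y - T.center ρ xstar I‖ := norm_nonneg _
      nlinarith
    calc T.cellErr ρ xstar I = ∫ x in s, ‖x - T.center ρ xstar I‖ ^ 2 ∂ρ := rfl
    _ ≤ ∫ _ in s, d ^ 2 ∂ρ := integral_mono_ae hint (integrable_const _) hb
    _ = (ρ s).toReal • d ^ 2 := by rw [integral_const, measureReal_restrict_apply_univ, measureReal_def]
    _ = d ^ 2 * (ρ s).toReal := by rw [smul_eq_mul, mul_comm]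
  -- conclude via the infimum
  by_contra hlt
  push_neg at hlt
  have hq : 0 ≤ T.cellErr ρ xstar I / (ρ s).toReal := by positivity
  set E := T.cellErr ρ xstar I with hE
  set t := Real.sqrt (E / (ρ s).toReal) with htdef
  have hed : ediam ρ s < t := by
    rw [htdef, Real.lt_sqrt (ediam_nonneg ρ s), lt_div_iff₀ ht]
    exact hlt
  have hne : Nonempty {J : Set (Euc D) // MeasurableSet J ∧ J ⊆ s ∧ ρ J = 0} :=
    ⟨⟨∅, MeasurableSet.empty, empty_subset _, measure_empty⟩⟩
  obtain ⟨J, hJlt⟩ := exists_lt_of_ciInf_lt (α := ℝ) hed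
  have hcl := claim J
  have hdn : Metric.diam (s \ (J : Set (Euc D))) ^ 2 < t ^ 2 :=
    pow_lt_pow_left₀ hJlt Metric.diam_nonneg (by norm_num)
  have ht2 : t ^ 2 = E / (ρ s).toReal := Real.sq_sqrt hq
  have hEr : E / (ρ s).toReal * (ρ s).toReal = E := div_mul_cancel₀ _ ht.ne'
  have hfinal : E < t ^ 2 * (ρ s).toReal :=
    lt_of_le_of_lt hcl (mul_lt_mul_of_pos_right hdn ht)
  rw [ht2, hEr] at hfinal
  exact lt_irrefl _ hfinal


/-- The center of mass minimizes the quadratic distortion (up to the bias term). -/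
lemma cellErr_le_integral [IsFiniteMeasure ρ] (hae : ∀ᵐ x ∂ρ, ‖x‖ ≤ 1)
    (hxs : ∀ I, ‖xstar I‖ ≤ 1) (I : T.Cell) (c : Euc D) (hc : ‖c‖ ≤ 1) :
    T.cellErr ρ xstar I ≤ ∫ x in T.cset I, ‖x - c‖ ^ 2 ∂ρ := by
  set s := T.cset I with hs
  by_cases hz : ρ s = 0
  · have h0 : ρ.restrict s = 0 := Measure.restrict_eq_zero.mpr hz
    rw [cellErr, ← hs, h0]
    simp
  have hfin : ρ s < ∞ := measure_lt_top ρ _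
  have ht : 0 < (ρ s).toReal := ENNReal.toReal_pos hz hfin.ne
  set μ := T.center ρ xstar I with hμ
  have hcenter : μ = (ρ s).toReal⁻¹ • ∫ x in s, x ∂ρ := by
    rw [hμ, center, if_pos]; exact hz
  set v := μ - c with hv
  have hintid : IntegrableOn (fun y : Euc D => y) s ρ := (integrable_id_ae hae).integrableOn
  have hμint : IntegrableOn (fun _ : Euc D => μ) s ρ := integrableOn_const hfin.ne
  have hmean : ∫ x in s, (x - μ) ∂ρ = 0 := by
    rw [integral_sub hintid hμint, integral_const, measureReal_restrict_apply_univ, measureReal_def, hcenter,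
      smul_smul, mul_inv_cancel₀ ht.ne', one_smul, sub_self]
  have hexp : ∀ x : Euc D, ‖x - c‖ ^ 2 = ‖x - μ‖ ^ 2 + (2 * ⟪v, x - μ⟫ + ‖v‖ ^ 2) := by
    intro x
    have hxc : x - c = (x - μ) + v := by rw [hv]; abel
    rw [hxc, norm_add_sq_real, real_inner_comm (x - μ) v]
    ring
  have hcont : Continuous (fun x : Euc D => ⟪v, x - μ⟫) :=
    continuous_const.inner (continuous_id.sub continuous_const)
  have hinner : Integrable (fun x => 2 * ⟪v, x - μ⟫ + ‖v‖ ^ 2) (ρ.restrict s) := by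
    refine Integrable.add (Integrable.const_mul ?_ 2) (integrable_const _)
    refine Integrable.mono' (integrable_const ((1 + ‖μ‖) * ‖v‖)) ?_ ?_
    · exact Continuous.aestronglyMeasurable hcont
    · refine (ae_restrict_of_ae hae).mono fun x hx => ?_
      calc ‖⟪v, x - μ⟫‖ = ‖⟪v, x - μ⟫‖ := rfl
      _ ≤ ‖v‖ * ‖x - μ‖ := norm_inner_le_norm v (x - μ)
      _ ≤ ‖v‖ * (1 + ‖μ‖) := by
          refine mul_le_mul_of_nonneg_left ?_ (norm_nonneg v)
          exact (norm_sub_le x μ).trans (by linarith)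
      _ = (1 + ‖μ‖) * ‖v‖ := mul_comm _ _
  have hsq : Integrable (fun x => ‖x - μ‖ ^ 2) (ρ.restrict s) := by
    refine Integrable.integrableOn (integrable_sq_dist hae μ ?_)
    exact T.norm_center_le hae hxs I
  have hinner1 : Integrable (fun x => ⟪v, x - μ⟫) (ρ.restrict s) := by
    refine Integrable.mono' (integrable_const ((1 + ‖μ‖) * ‖v‖)) ?_ ?_
    · exact Continuous.aestronglyMeasurable hcont
    · refine (ae_restrict_of_ae hae).mono fun x hx => ?_
      calc ‖⟪v, x - μ⟫‖ ≤ ‖v‖ * ‖x - μ‖ := norm_inner_le_norm v (x - μ)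
      _ ≤ ‖v‖ * (1 + ‖μ‖) := by
          refine mul_le_mul_of_nonneg_left ?_ (norm_nonneg v)
          exact (norm_sub_le x μ).trans (by linarith)
      _ = (1 + ‖μ‖) * ‖v‖ := mul_comm _ _
  have hsub : Integrable (fun x : Euc D => x - μ) (ρ.restrict s) := hintid.sub hμint
  have hI2 : ∫ x in s, (2 * ⟪v, x - μ⟫ + ‖v‖ ^ 2) ∂ρ = (ρ s).toReal * ‖v‖ ^ 2 := by
    rw [integral_add (hinner1.const_mul 2) (integrable_const _), integral_const_mul,
      integral_inner hsub, hmean, inner_zero_right, integral_const,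
      measureReal_restrict_apply_univ, measureReal_def, smul_eq_mul]
    ring
  calc T.cellErr ρ xstar I = ∫ x in s, ‖x - μ‖ ^ 2 ∂ρ := rfl
  _ ≤ ∫ x in s, ‖x - μ‖ ^ 2 ∂ρ + (ρ s).toReal * ‖v‖ ^ 2 :=
      le_add_of_nonneg_right (by positivity)
  _ = ∫ x in s, (‖x - μ‖ ^ 2 + (2 * ⟪v, x - μ⟫ + ‖v‖ ^ 2)) ∂ρ := by
      rw [integral_add hsq hinner, hI2]
  _ = ∫ x in s, ‖x - c‖ ^ 2 ∂ρ := by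
      exact integral_congr_ae (Filter.Eventually.of_forall fun x => (hexp x).symm)


lemma integral_cset_eq_sum_children [IsFiniteMeasure ρ] {f : Euc D → ℝ}
    (hf : Integrable f ρ) (I : T.Cell) :
    ∫ x in T.cset I, f x ∂ρ =
      ∑ J ∈ (T.children_finite I).toFinset, ∫ x in T.cset J, f x ∂ρ := by
  have hunion : ⋃ J ∈ (T.children_finite I).toFinset, T.cset J = T.cset I := by
    rw [T.cset_eq_iUnion_children I]
    ext x
    simp only [mem_iUnion, Set.Finite.mem_toFinset, exists_prop]
    rfl
  rw [← hunion]
  refine integral_biUnion_finset _ (fun J _ => T.cset_measurable J) ?_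
    (fun J _ => hf.integrableOn)
  intro J hJ K hK hne
  simp only [Finset.mem_coe, Set.Finite.mem_toFinset] at hJ hK
  exact T.level_disjoint J K (by rw [T.depth_child hJ, T.depth_child hK]) hne

lemma sum_children_cellErr_le [IsFiniteMeasure ρ] (hae : ∀ᵐ x ∂ρ, ‖x‖ ≤ 1)
    (hxs : ∀ I, ‖xstar I‖ ≤ 1) (I : T.Cell) :
    ∑ J ∈ (T.children_finite I).toFinset, T.cellErr ρ xstar J ≤ T.cellErr ρ xstar I := by
  have hc := T.norm_center_le hae hxs I
  calc ∑ J ∈ (T.children_finite I).toFinset, T.cellErr ρ xstar J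
      ≤ ∑ J ∈ (T.children_finite I).toFinset,
          ∫ x in T.cset J, ‖x - T.center ρ xstar I‖ ^ 2 ∂ρ :=
        Finset.sum_le_sum fun J _ => T.cellErr_le_integral hae hxs J _ hc
  _ = ∫ x in T.cset I, ‖x - T.center ρ xstar I‖ ^ 2 ∂ρ :=
      (T.integral_cset_eq_sum_children (integrable_sq_dist hae _ hc) I).symm
  _ = T.cellErr ρ xstar I := rfl

lemma epsSq_eq (I : T.Cell) :
    T.epsSq ρ xstar I =
      T.cellErr ρ xstar I - ∑ J ∈ (T.children_finite I).toFinset, T.cellErr ρ xstar J := by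
  rw [epsSq, finsum_mem_eq_finite_toFinset_sum _ (T.children_finite I)]

lemma epsSq_nonneg [IsFiniteMeasure ρ] (hae : ∀ᵐ x ∂ρ, ‖x‖ ≤ 1)
    (hxs : ∀ I, ‖xstar I‖ ≤ 1) (I : T.Cell) : 0 ≤ T.epsSq ρ xstar I := by
  rw [T.epsSq_eq]
  linarith [T.sum_children_cellErr_le hae hxs I]

lemma epsSq_le_cellErr (I : T.Cell) : T.epsSq ρ xstar I ≤ T.cellErr ρ xstar I := by
  rw [T.epsSq_eq]
  have : (0:ℝ) ≤ ∑ J ∈ (T.children_finite I).toFinset, T.cellErr ρ xstar J :=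
    Finset.sum_nonneg fun J _ => T.cellErr_nonneg J
  linarith

lemma epsSq_lt_sq [IsFiniteMeasure ρ] (hae : ∀ᵐ x ∂ρ, ‖x‖ ≤ 1)
    (hxs : ∀ I, ‖xstar I‖ ≤ 1) {I : T.Cell} {η : ℝ} (h : T.eps ρ xstar I < η) :
    T.epsSq ρ xstar I < η ^ 2 := by
  have h0 : 0 ≤ Real.sqrt (T.epsSq ρ xstar I) := Real.sqrt_nonneg _
  have h2 := Real.sq_sqrt (T.epsSq_nonneg hae hxs I)
  rw [eps] at h
  nlinarith [h, h0, h2]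

lemma eps_sq_le [IsFiniteMeasure ρ] (hae : ∀ᵐ x ∂ρ, ‖x‖ ≤ 1)
    (hxs : ∀ I, ‖xstar I‖ ≤ 1) {I : T.Cell} {η : ℝ} (h : η ≤ T.eps ρ xstar I) (hη : 0 ≤ η) :
    η ^ 2 ≤ T.epsSq ρ xstar I := by
  have hq := T.epsSq_nonneg hae hxs I
  have h2 := Real.sq_sqrt hq
  rw [eps] at h
  nlinarith [Real.sqrt_nonneg (T.epsSq ρ xstar I)]

lemma sum_descend_succ (g : T.Cell → ℝ) (k : ℕ) (I : T.Cell) :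
    ∑ J ∈ (T.descend_finite (k + 1) I).toFinset, g J =
      ∑ J ∈ (T.descend_finite k I).toFinset, ∑ K ∈ (T.children_finite J).toFinset, g K := by
  rw [← Finset.sum_biUnion]
  · congr 1
    ext K
    simp only [Finset.mem_biUnion, Set.Finite.mem_toFinset, descend_succ, mem_iUnion, exists_prop]
  · intro J hJ J' hJ' hne
    simp only [Finset.mem_coe, Set.Finite.mem_toFinset] at hJ hJ'
    refine Finset.disjoint_left.mpr fun K hK hK' => ?_
    rw [Set.Finite.mem_toFinset] at hK hK'
    exact hne (hK.1 ▸ hK'.1.symm ▸ rfl)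

lemma cellErr_telescope [IsFiniteMeasure ρ] (hae : ∀ᵐ x ∂ρ, ‖x‖ ≤ 1)
    (hxs : ∀ I, ‖xstar I‖ ≤ 1) (I : T.Cell) (m : ℕ) :
    T.cellErr ρ xstar I =
      (∑ k ∈ Finset.range (m + 1),
        ∑ J ∈ (T.descend_finite k I).toFinset, T.epsSq ρ xstar J) +
      ∑ J ∈ (T.descend_finite (m + 1) I).toFinset, T.cellErr ρ xstar J := by
  have hsingle : ∀ g : T.Cell → ℝ, ∑ J ∈ (T.descend_finite 0 I).toFinset, g J = g I := by
    intro g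
    have : (T.descend_finite 0 I).toFinset = {I} := by
      ext J
      simp [Set.Finite.mem_toFinset, descend]
    rw [this, Finset.sum_singleton]
  have hstep : ∀ k, ∑ J ∈ (T.descend_finite k I).toFinset, T.cellErr ρ xstar J =
      (∑ J ∈ (T.descend_finite k I).toFinset, T.epsSq ρ xstar J) +
      ∑ J ∈ (T.descend_finite (k + 1) I).toFinset, T.cellErr ρ xstar J := by
    intro k
    rw [T.sum_descend_succ (T.cellErr ρ xstar) k I, ← Finset.sum_add_distrib]
    refine Finset.sum_congr rfl fun J _ => ?_
    rw [T.epsSq_eq]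
    ring
  induction m with
  | zero =>
    rw [Finset.sum_range_one, hsingle]
    have := hstep 0
    rw [hsingle, hsingle] at this
    linarith
  | succ m ih =>
    rw [Finset.sum_range_succ, ih, hstep (m + 1)]
    ring


lemma sum_measure_le_one [IsProbabilityMeasure ρ] {F : Finset T.Cell}
    (hd : (↑F : Set T.Cell).Pairwise (Function.onFun Disjoint fun I => T.cset I)) :
    ∑ I ∈ F, (ρ (T.cset I)).toReal ≤ 1 := by
  have h1 : ∑ I ∈ F, ρ (T.cset I) = ρ (⋃ I ∈ F, T.cset I) :=
    (measure_biUnion_finset hd (fun I _ => T.cset_measurable I)).symm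
  have h2 : ∑ I ∈ F, (ρ (T.cset I)).toReal = (∑ I ∈ F, ρ (T.cset I)).toReal := by
    rw [ENNReal.toReal_sum fun I _ => measure_ne_top ρ _]
  rw [h2, h1]
  calc (ρ (⋃ I ∈ F, T.cset I)).toReal ≤ (ρ univ).toReal :=
    ENNReal.toReal_mono (measure_ne_top ρ _) (measure_mono (subset_univ _))
  _ = 1 := by simp

lemma pairwise_disjoint_level {j : ℕ} {F : Finset T.Cell} (hF : ∀ I ∈ F, T.depth I = j) :
    (↑F : Set T.Cell).Pairwise (Function.onFun Disjoint fun I => T.cset I) := by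
  intro I hI J hJ hne
  simp only [Finset.mem_coe] at hI hJ
  exact T.level_disjoint I J (by rw [hF I hI, hF J hJ]) hne

lemma proj_eq_on {Λ : Set T.Cell} (hfin : Λ.Finite)
    (hdis : Λ.Pairwise (Function.onFun Disjoint fun I => T.cset I)) (c : T.Cell → Euc D) {I : T.Cell}
    (hI : I ∈ Λ) {x : Euc D} (hx : x ∈ T.cset I) : T.proj c Λ x = c I := by
  rw [proj, finsum_mem_eq_finite_toFinset_sum _ hfin]
  rw [Finset.sum_eq_single I]
  · exact indicator_of_mem hx _
  · intro J hJ hne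
    refine indicator_of_notMem (fun hxJ => ?_) _
    rw [Set.Finite.mem_toFinset] at hJ
    exact (hdis hJ hI hne).le_bot ⟨hxJ, hx⟩
  · intro hnotin
    exact absurd (hfin.mem_toFinset.mpr hI) hnotin

lemma measurable_proj {Λ : Set T.Cell} (hfin : Λ.Finite) (c : T.Cell → Euc D) :
    Measurable (T.proj c Λ) := by
  have hrw : T.proj c Λ = fun x => ∑ I ∈ hfin.toFinset, (T.cset I).indicator (fun _ => c I) x :=
    funext fun x => finsum_mem_eq_finite_toFinset_sum _ hfin
  rw [hrw]
  exact Finset.measurable_sum _ fun I _ => Measurable.indicator measurable_const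
    (T.cset_measurable I)

lemma integral_proj_eq_sum [IsProbabilityMeasure ρ] (hXc : ρ Xᶜ = 0)
    (hae : ∀ᵐ x ∂ρ, ‖x‖ ≤ 1) {Λ : Set T.Cell} (hfin : Λ.Finite)
    (hdis : Λ.Pairwise (Function.onFun Disjoint fun I => T.cset I)) {c : T.Cell → Euc D}
    (hc : ∀ I, ‖c I‖ ≤ 1) (hcov : X ⊆ ⋃ I ∈ Λ, T.cset I) :
    ∫ x, ‖x - T.proj c Λ x‖ ^ 2 ∂ρ =
      ∑ I ∈ hfin.toFinset, ∫ x in T.cset I, ‖x - c I‖ ^ 2 ∂ρ := by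
  set f := fun x => ‖x - T.proj c Λ x‖ ^ 2 with hf
  have hmeas : Measurable f :=
    ((measurable_id.sub (T.measurable_proj hfin c)).norm.pow_const 2)
  have hcov' : X ⊆ ⋃ I ∈ hfin.toFinset, T.cset I := by
    refine hcov.trans ?_
    intro y hy
    rw [mem_iUnion₂] at hy ⊢
    obtain ⟨I, hI, hyI⟩ := hy
    exact ⟨I, hfin.mem_toFinset.mpr hI, hyI⟩
  have hbound : ∀ᵐ x ∂ρ, ‖f x‖ ≤ 4 := by
    filter_upwards [ae_mem_X hXc, hae] with x hxX hx1
    obtain ⟨I, hI, hxI⟩ := mem_iUnion₂.mp (hcov hxX)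
    have hproj : T.proj c Λ x = c I := T.proj_eq_on hfin hdis c hI hxI
    have h2 : ‖x - T.proj c Λ x‖ ≤ 2 := by
      rw [hproj]
      exact (norm_sub_le _ _).trans (by linarith [hc I])
    have h0 : (0:ℝ) ≤ ‖x - T.proj c Λ x‖ := norm_nonneg _
    calc ‖f x‖ = ‖x - T.proj c Λ x‖ ^ 2 := Real.norm_of_nonneg (by positivity)
    _ ≤ 4 := by nlinarith
  have hint : Integrable f ρ :=
    Integrable.mono' (integrable_const 4) hmeas.aestronglyMeasurable hbound
  set U := ⋃ I ∈ hfin.toFinset, T.cset I with hU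
  have hUm : MeasurableSet U := Finset.measurableSet_biUnion _ fun I _ => T.cset_measurable I
  have hUc : ρ Uᶜ = 0 := by
    refine measure_mono_null ?_ hXc
    exact compl_subset_compl.mpr hcov'
  have hsplit : ∫ x, f x ∂ρ = ∫ x in U, f x ∂ρ := by
    rw [← integral_add_compl hUm hint, Measure.restrict_eq_zero.mpr hUc,
      integral_zero_measure, add_zero]
  rw [hsplit, hU, integral_biUnion_finset _ (fun I _ => T.cset_measurable I) ?_
    (fun I _ => hint.integrableOn)]
  · refine Finset.sum_congr rfl fun I hI => ?_
    refine setIntegral_congr_fun (T.cset_measurable I) fun x hx => ?_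
    rw [hfin.mem_toFinset] at hI
    simp only [hf]
    rw [T.proj_eq_on hfin hdis c hI hx]
  · intro I hI J hJ hne
    simp only [Finset.mem_coe, Set.Finite.mem_toFinset] at hI hJ
    exact hdis hI hJ hne


end PartitionTree

section RealLemmas

/-- `min A B ≤ A^θ * B^(1-θ)` for positive `A B` and `θ ∈ [0,1]`. -/
lemma min_le_rpow_interp {A B θ : ℝ} (hA : 0 < A) (hB : 0 < B) (hθ0 : 0 ≤ θ) (hθ1 : θ ≤ 1) :
    min A B ≤ A ^ θ * B ^ (1 - θ) := by
  have hm : 0 < min A B := lt_min hA hB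
  have h1 : min A B = (min A B) ^ θ * (min A B) ^ (1 - θ) := by
    rw [← Real.rpow_add hm]
    simp
  rw [h1]
  exact mul_le_mul (Real.rpow_le_rpow hm.le (min_le_left _ _) hθ0)
    (Real.rpow_le_rpow hm.le (min_le_right _ _) (by linarith))
    (Real.rpow_nonneg hm.le _) (Real.rpow_nonneg (le_of_lt hA) _)

/-- The interpolation bound `min(η², C₁² x^{2s+1}) ≤ C₁^{2/(2s+1)} η^{4s/(2s+1)} x`. -/
lemma min_interp {C₁ s η : ℝ} (hC₁ : 0 < C₁) (hs : 0 < s) (hη : 0 < η) {x : ℝ} (hx : 0 ≤ x) :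
    min (η ^ 2) ((C₁ * x ^ s) ^ 2 * x) ≤
      C₁ ^ (2 / (2 * s + 1)) * η ^ (4 * s / (2 * s + 1)) * x := by
  have h2s : 0 < 2 * s + 1 := by linarith
  rcases eq_or_lt_of_le hx with rfl | hx0
  · rw [mul_zero, mul_zero]
    exact min_le_right _ _
  · set θ := 2 * s / (2 * s + 1) with hθ
    have hθ0 : 0 ≤ θ := by positivity
    have hθ1 : θ ≤ 1 := by
      rw [hθ, div_le_one h2s]
      linarith
    have h1θ : 1 - θ = 1 / (2 * s + 1) := by
      rw [hθ]
      field_simp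
      ring
    have hB : 0 < (C₁ * x ^ s) ^ 2 * x := by positivity
    calc min (η ^ 2) ((C₁ * x ^ s) ^ 2 * x)
        ≤ (η ^ 2) ^ θ * ((C₁ * x ^ s) ^ 2 * x) ^ (1 - θ) :=
          min_le_rpow_interp (by positivity) hB hθ0 hθ1
    _ = C₁ ^ (2 / (2 * s + 1)) * η ^ (4 * s / (2 * s + 1)) * x := by
        rw [h1θ]
        have e1 : ((η ^ 2 : ℝ)) ^ θ = η ^ (4 * s / (2 * s + 1)) := by
          rw [← Real.rpow_natCast η 2, ← Real.rpow_mul hη.le]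
          congr 1
          rw [hθ]
          push_cast
          ring
        have hxx : (C₁ * x ^ s) ^ 2 * x = (C₁ ^ 2) * x ^ (2 * s + 1) := by
          rw [mul_pow, sq (x ^ s), ← Real.rpow_add hx0, mul_assoc,
            ← Real.rpow_add_one hx0.ne' (s + s), show s + s + 1 = 2 * s + 1 by ring]
        have e2 : ((C₁ * x ^ s) ^ 2 * x) ^ (1 / (2 * s + 1)) =
            C₁ ^ (2 / (2 * s + 1)) * x := by
          rw [hxx, Real.mul_rpow (by positivity) (by positivity),
            ← Real.rpow_natCast C₁ 2, ← Real.rpow_mul hC₁.le,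
            ← Real.rpow_mul hx]
          push_cast
          rw [show (2 : ℝ) * (1 / (2 * s + 1)) = 2 / (2 * s + 1) by ring,
            show (2 * s + 1) * (1 / (2 * s + 1)) = 1 by field_simp, Real.rpow_one]
        rw [e1, e2]
        ring
      

lemma log_le_rpow_div {x t : ℝ} (hx : 0 < x) (ht : 0 < t) : Real.log x ≤ x ^ t / t := by
  have h := Real.log_le_sub_one_of_pos (Real.rpow_pos_of_pos hx t)
  rw [Real.log_rpow hx] at h
  have h2 : t * Real.log x ≤ x ^ t := by linarith
  calc Real.log x = t * Real.log x / t := by field_simp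
  _ ≤ x ^ t / t := by
      rw [div_le_div_iff₀ ht ht]
      nlinarith [Real.rpow_pos_of_pos hx t]

lemma geom_Ico_le {r : ℝ} (hr0 : 0 ≤ r) (hr1 : r < 1) (m n : ℕ) :
    ∑ j ∈ Finset.Ico m n, r ^ j ≤ r ^ m / (1 - r) := by
  have h1r : 0 < 1 - r := by linarith
  rcases le_or_gt m n with h | h
  · rw [geom_sum_Ico hr1.ne h,
      show (r ^ n - r ^ m) / (r - 1) = (r ^ m - r ^ n) / (1 - r) by
        rw [div_eq_div_iff (by linarith) (by linarith)]; ring]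
    exact (div_le_div_iff_of_pos_right h1r).mpr (by nlinarith [pow_nonneg hr0 n])
  · rw [Finset.Ico_eq_empty (by omega), Finset.sum_empty]
    positivity

lemma sum_min_le_geom {G C r : ℝ} (hG : 0 ≤ G) (hC : 0 ≤ C) (hr0 : 0 ≤ r) (hr1 : r < 1)
    (N M : ℕ) :
    ∑ j ∈ Finset.range (M + 1), min G (C * r ^ j) ≤
      (N + 1 : ℝ) * G + C * (r ^ (N + 1) / (1 - r)) := by
  have h1 : ∑ j ∈ Finset.range (M + 1), min G (C * r ^ j) ≤
      ∑ j ∈ Finset.range (M + 1), (if j ≤ N then G else C * r ^ j) := by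
    refine Finset.sum_le_sum fun j _ => ?_
    split
    · exact min_le_left _ _
    · exact min_le_right _ _
  refine h1.trans ?_
  rw [Finset.sum_ite]
  have hpart1 : ∑ _j ∈ (Finset.range (M + 1)).filter (fun j => j ≤ N), G ≤ (N + 1 : ℝ) * G := by
    rw [Finset.sum_const, nsmul_eq_mul]
    have hcard : ((Finset.range (M + 1)).filter (fun j => j ≤ N)).card ≤ N + 1 := by
      have hsub : (Finset.range (M + 1)).filter (fun j => j ≤ N) ⊆ Finset.range (N + 1) := by
        intro j hj
        simp only [Finset.mem_filter, Finset.mem_range] at hj ⊢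
        omega
      simpa using Finset.card_le_card hsub
    have : (((Finset.range (M + 1)).filter (fun j => j ≤ N)).card : ℝ) ≤ (N + 1 : ℝ) := by
      exact_mod_cast hcard
    nlinarith
  have hpart2 : ∑ j ∈ (Finset.range (M + 1)).filter (fun j => ¬ j ≤ N), C * r ^ j ≤
      C * (r ^ (N + 1) / (1 - r)) := by
    have hset : (Finset.range (M + 1)).filter (fun j => ¬ j ≤ N) = Finset.Ico (N + 1) (M + 1) := by
      ext j
      simp only [Finset.mem_filter, Finset.mem_range, Finset.mem_Ico]
      omega
    rw [hset, ← Finset.mul_sum]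
    exact mul_le_mul_of_nonneg_left (geom_Ico_le hr0 hr1 _ _) hC
  linarith


end RealLemmas

lemma neg_rpow_sq {b : ℝ} (hb : 0 < b) (j : ℕ) :
    (b ^ (-(j : ℝ))) ^ 2 = ((b ^ 2)⁻¹) ^ j := by
  rw [Real.rpow_neg hb.le, Real.rpow_natCast, inv_pow, inv_pow, ← pow_mul, ← pow_mul,
    Nat.mul_comm]

namespace PartitionTree

variable {D : ℕ} {X : Set (Euc D)} {a : ℕ} {T : PartitionTree D X a}
  {ρ : Measure (Euc D)} {xstar : T.Cell → Euc D} {b s C₁ C₂ : ℝ}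

lemma descend_leaf_disjoint {S : Set T.Cell} (hS : T.IsSubtree S) {I I' J : T.Cell}
    (hI : I ∈ T.outerLeaves S) (hI' : I' ∈ T.outerLeaves S) (hne : I ≠ I') {k k' : ℕ}
    (h : J ∈ T.descend k I) (h' : J ∈ T.descend k' I') : False := by
  have key : ∀ (k k' : ℕ) (I I' : T.Cell), k' ≤ k → I ∈ T.outerLeaves S →
      I' ∈ T.outerLeaves S → I ≠ I' → T.parent^[k] J = I → T.parent^[k'] J = I' → False := by
    intro k k' I I' hle hI hI' hne hk hk'
    rcases eq_or_lt_of_le hle with rfl | hlt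
    · exact hne (hk ▸ hk'.symm ▸ rfl)
    · have hsplit : T.parent^[k] J = T.parent^[k - k'] I' := by
        rw [← hk', ← Function.iterate_add_apply]
        congr 1
        omega
      have hmem : T.parent^[k - k'] I' ∈ S := by
        have h1 : T.parent^[k - k'] I' = T.parent^[k - k' - 1] (T.parent I') := by
          conv_lhs => rw [show k - k' = (k - k' - 1) + 1 by omega]
          rw [Function.iterate_succ_apply]
        rw [h1]
        exact T.subtree_parent_iter hS hI'.2 _
      rw [← hsplit, hk] at hmem
      exact hI.1 hmem
  have hk := T.parent_iter_of_mem_descend h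
  have hk' := T.parent_iter_of_mem_descend h'
  rcases le_total k' k with hle | hle
  · exact key k k' I I' hle hI hI' hne hk hk'
  · exact key k' k I' I hle hI' hI hne.symm hk' hk

lemma main_bound [IsProbabilityMeasure ρ] (hXc : ρ Xᶜ = 0) (h0X : (0 : Euc D) ∈ X)
    (hXb : Bornology.IsBounded X) (hXd : Metric.diam X ≤ 1) (hxsX : ∀ I, xstar I ∈ X)
    (hA : AssumptionA T ρ b s C₁ C₂) (hb : 1 < b) (hs : 0 < s) (hC₁ : 0 < C₁) (hC₂ : 0 < C₂)
    {η : ℝ} (hη : 0 < η) (N : ℕ) :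
    (∫ x, ‖x - T.proj (T.center ρ xstar) (T.outerLeaves (T.Teta ρ xstar η)) x‖ ^ 2 ∂ρ) ≤
      ((N : ℝ) + 2) * (C₁ ^ (2 / (2 * s + 1)) * η ^ (4 * s / (2 * s + 1))) +
      C₂ ^ 2 * (((b ^ 2)⁻¹) ^ (N + 1) / (1 - (b ^ 2)⁻¹)) := by
  have hb0 : (0:ℝ) < b := lt_trans one_pos hb
  set r : ℝ := (b ^ 2)⁻¹ with hrdef
  have hb2 : (1:ℝ) < b ^ 2 := one_lt_pow₀ hb (by norm_num)
  have hr0 : 0 ≤ r := by positivity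
  have hr1 : r < 1 := by
    rw [hrdef, inv_lt_one_iff₀]
    right
    exact hb2
  set G : ℝ := C₁ ^ (2 / (2 * s + 1)) * η ^ (4 * s / (2 * s + 1)) with hGdef
  have hG0 : 0 < G := by
    rw [hGdef]
    positivity
  have hae : ∀ᵐ x ∂ρ, ‖x‖ ≤ 1 :=
    (ae_mem_X hXc).mono fun x hx => mem_X_norm_le h0X hXb hXd hx
  have hxs : ∀ I, ‖xstar I‖ ≤ 1 := fun I => mem_X_norm_le h0X hXb hXd (hxsX I)
  have hcnorm : ∀ I, ‖T.center ρ xstar I‖ ≤ 1 := T.norm_center_le hae hxs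
  have hρ1 : ∀ I : T.Cell, (ρ (T.cset I)).toReal ≤ 1 := by
    intro I
    calc (ρ (T.cset I)).toReal ≤ (1 : ℝ≥0∞).toReal :=
      ENNReal.toReal_mono ENNReal.one_ne_top prob_le_one
    _ = 1 := by simp
  have hρ0 : ∀ I : T.Cell, 0 ≤ (ρ (T.cset I)).toReal := fun I => ENNReal.toReal_nonneg
  -- Assumption A consequences
  have bound2 : ∀ J : T.Cell,
      T.cellErr ρ xstar J ≤ C₂ ^ 2 * r ^ (T.depth J) * (ρ (T.cset J)).toReal := by
    intro J
    calc T.cellErr ρ xstar J ≤ (ediam ρ (T.cset J)) ^ 2 * (ρ (T.cset J)).toReal :=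
      T.cellErr_le_ediam_sq hae hxs hXb J
    _ ≤ (C₂ * b ^ (-(T.depth J : ℝ))) ^ 2 * (ρ (T.cset J)).toReal := by
        refine mul_le_mul_of_nonneg_right ?_ (hρ0 J)
        exact pow_le_pow_left₀ (ediam_nonneg ρ _) (hA J).2 2
    _ = C₂ ^ 2 * r ^ (T.depth J) * (ρ (T.cset J)).toReal := by
        rw [mul_pow, neg_rpow_sq hb0, hrdef]
  have bound1 : ∀ J : T.Cell,
      T.cellErr ρ xstar J ≤ (C₁ * (ρ (T.cset J)).toReal ^ s) ^ 2 * (ρ (T.cset J)).toReal := by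
    intro J
    calc T.cellErr ρ xstar J ≤ (ediam ρ (T.cset J)) ^ 2 * (ρ (T.cset J)).toReal :=
      T.cellErr_le_ediam_sq hae hxs hXb J
    _ ≤ _ := by
        refine mul_le_mul_of_nonneg_right ?_ (hρ0 J)
        exact pow_le_pow_left₀ (ediam_nonneg ρ _) (hA J).1 2
  -- depth bound for cells with eps ≥ η
  obtain ⟨j₀, hj₀⟩ : ∃ j₀, ∀ I, η ≤ T.eps ρ xstar I → T.depth I ≤ j₀ := by
    obtain ⟨n, hn⟩ := pow_unbounded_of_one_lt (C₂ / η) hb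
    refine ⟨n, fun I hIη => ?_⟩
    have h1 : η ^ 2 ≤ T.cellErr ρ xstar I :=
      (T.eps_sq_le hae hxs hIη hη.le).trans (T.epsSq_le_cellErr I)
    have h2 : T.cellErr ρ xstar I ≤ C₂ ^ 2 * r ^ (T.depth I) := by
      calc T.cellErr ρ xstar I ≤ C₂ ^ 2 * r ^ (T.depth I) * (ρ (T.cset I)).toReal := bound2 I
      _ ≤ C₂ ^ 2 * r ^ (T.depth I) * 1 :=
          mul_le_mul_of_nonneg_left (hρ1 I) (by positivity)
      _ = _ := mul_one _
    set j := T.depth I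
    have hb2j : (0:ℝ) < (b ^ 2) ^ j := by positivity
    have h3 : η ^ 2 * (b ^ 2) ^ j ≤ C₂ ^ 2 := by
      have h4 : η ^ 2 * (b ^ 2) ^ j ≤ C₂ ^ 2 * r ^ j * (b ^ 2) ^ j :=
        mul_le_mul_of_nonneg_right (h1.trans h2) hb2j.le
      have h5 : r ^ j * (b ^ 2) ^ j = 1 := by
        rw [hrdef, ← mul_pow, inv_mul_cancel₀ (by positivity), one_pow]
      calc η ^ 2 * (b ^ 2) ^ j ≤ C₂ ^ 2 * r ^ j * (b ^ 2) ^ j := h4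
      _ = C₂ ^ 2 * (r ^ j * (b ^ 2) ^ j) := by ring
      _ = C₂ ^ 2 := by rw [h5, mul_one]
    have h6 : (η * b ^ j) ^ 2 ≤ C₂ ^ 2 := by
      calc (η * b ^ j) ^ 2 = η ^ 2 * (b ^ 2) ^ j := by rw [mul_pow, ← pow_mul, ← pow_mul,
        Nat.mul_comm]
      _ ≤ C₂ ^ 2 := h3
    have h7 : η * b ^ j ≤ C₂ :=
      le_of_pow_le_pow_left₀ (by norm_num) hC₂.le h6
    have h8 : (b:ℝ) ^ j ≤ C₂ / η := by
      rw [le_div_iff₀ hη]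
      linarith [h7]
    have h9 : (b:ℝ) ^ j < b ^ n := lt_of_le_of_lt h8 hn
    exact le_of_lt ((pow_lt_pow_iff_right₀ hb).mp h9)
  -- the tree 𝒯_η and its leaves
  have hTsub : T.IsSubtree (T.Teta ρ xstar η) := T.isSubtree_Teta ρ xstar
  have hTfin : (T.Teta ρ xstar η).Finite := T.Teta_finite ρ xstar hj₀
  have hroot : T.root ∈ T.Teta ρ xstar η := T.root_mem_Teta ρ xstar
  set Λ : Set T.Cell := T.outerLeaves (T.Teta ρ xstar η) with hΛdef
  have hΛfin : Λ.Finite := T.outerLeaves_finite hTfin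
  have hdisΛ : Λ.Pairwise (Function.onFun Disjoint fun I => T.cset I) := fun I hI J hJ hne =>
    T.outerLeaves_disjoint hTsub hI hJ hne
  have hcov : X ⊆ ⋃ I ∈ Λ, T.cset I := by
    intro x hx
    obtain ⟨I, hI, hxI⟩ := T.exists_outerLeaf_mem hTsub hTfin hroot hx
    exact mem_biUnion hI hxI
  -- every descendant of a leaf has small epsSq
  have hsmall : ∀ {I : T.Cell}, I ∈ Λ → ∀ {k : ℕ} {J : T.Cell}, J ∈ T.descend k I →
      T.epsSq ρ xstar J < η ^ 2 := by
    intro I hI k J hJ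
    have : J ∉ T.Teta ρ xstar η := T.not_mem_of_mem_descend_of_not_mem hTsub hI.1 hJ
    exact T.epsSq_lt_sq hae hxs (T.eps_lt_of_not_mem_Teta ρ xstar this)
  -- the integral identity
  have hIdentity : (∫ x, ‖x - T.proj (T.center ρ xstar) Λ x‖ ^ 2 ∂ρ) =
      ∑ I ∈ hΛfin.toFinset, T.cellErr ρ xstar I :=
    T.integral_proj_eq_sum hXc hae hΛfin hdisΛ hcnorm hcov
  -- choice of the truncation depth m
  obtain ⟨m, hm⟩ : ∃ m, (hΛfin.toFinset.card : ℝ) * C₂ ^ 2 * r ^ m ≤ G := by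
    set K : ℝ := (hΛfin.toFinset.card : ℝ) * C₂ ^ 2 with hKdef
    have hK0 : 0 ≤ K := by positivity
    obtain ⟨n, hn⟩ := exists_pow_lt_of_lt_one (div_pos hG0 (by linarith : (0:ℝ) < K + 1)) hr1
    refine ⟨n, ?_⟩
    calc K * r ^ n ≤ (K + 1) * r ^ n :=
      mul_le_mul_of_nonneg_right (by linarith) (pow_nonneg hr0 n)
    _ ≤ (K + 1) * (G / (K + 1)) :=
      mul_le_mul_of_nonneg_left hn.le (by linarith)
    _ = G := by field_simp
  -- telescoping
  have htel : ∑ I ∈ hΛfin.toFinset, T.cellErr ρ xstar I =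
      (∑ I ∈ hΛfin.toFinset, ∑ k ∈ Finset.range (m + 1),
        ∑ J ∈ (T.descend_finite k I).toFinset, T.epsSq ρ xstar J) +
      ∑ I ∈ hΛfin.toFinset,
        ∑ J ∈ (T.descend_finite (m + 1) I).toFinset, T.cellErr ρ xstar J := by
    rw [← Finset.sum_add_distrib]
    exact Finset.sum_congr rfl fun I _ => T.cellErr_telescope hae hxs I m
  -- remainder bound
  have hrem : ∑ I ∈ hΛfin.toFinset,
      ∑ J ∈ (T.descend_finite (m + 1) I).toFinset, T.cellErr ρ xstar J ≤ G := by
    have hper : ∀ I ∈ hΛfin.toFinset,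
        ∑ J ∈ (T.descend_finite (m + 1) I).toFinset, T.cellErr ρ xstar J ≤
          C₂ ^ 2 * r ^ (m + 1) := by
      intro I _
      have hd : ∀ J ∈ (T.descend_finite (m + 1) I).toFinset,
          T.depth J = T.depth I + (m + 1) := fun J hJ =>
        T.mem_descend_depth (Set.Finite.mem_toFinset _ |>.mp hJ)
      calc ∑ J ∈ (T.descend_finite (m + 1) I).toFinset, T.cellErr ρ xstar J
          ≤ ∑ J ∈ (T.descend_finite (m + 1) I).toFinset,
            C₂ ^ 2 * r ^ (m + 1) * (ρ (T.cset J)).toReal := by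
            refine Finset.sum_le_sum fun J hJ => ?_
            refine (bound2 J).trans ?_
            refine mul_le_mul_of_nonneg_right ?_ (hρ0 J)
            refine mul_le_mul_of_nonneg_left ?_ (by positivity)
            rw [hd J hJ]
            exact pow_le_pow_of_le_one hr0 hr1.le (by omega)
      _ = C₂ ^ 2 * r ^ (m + 1) *
            ∑ J ∈ (T.descend_finite (m + 1) I).toFinset, (ρ (T.cset J)).toReal := by
            rw [Finset.mul_sum]
      _ ≤ C₂ ^ 2 * r ^ (m + 1) * 1 := by
            refine mul_le_mul_of_nonneg_left ?_ (by positivity)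
            exact T.sum_measure_le_one (T.pairwise_disjoint_level
              (j := T.depth I + (m + 1)) fun J hJ => hd J hJ)
      _ = C₂ ^ 2 * r ^ (m + 1) := mul_one _
    calc ∑ I ∈ hΛfin.toFinset,
        ∑ J ∈ (T.descend_finite (m + 1) I).toFinset, T.cellErr ρ xstar J
        ≤ hΛfin.toFinset.card • (C₂ ^ 2 * r ^ (m + 1)) :=
          Finset.sum_le_card_nsmul _ _ _ hper
    _ = (hΛfin.toFinset.card : ℝ) * C₂ ^ 2 * r ^ (m + 1) := by
          rw [nsmul_eq_mul]; ring
    _ ≤ (hΛfin.toFinset.card : ℝ) * C₂ ^ 2 * r ^ m := by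
          refine mul_le_mul_of_nonneg_left ?_ (by positivity)
          exact pow_le_pow_of_le_one hr0 hr1.le (by omega)
    _ ≤ G := hm
  -- collect the main term into a single finset
  set Sfin : Finset T.Cell := hΛfin.toFinset.biUnion
    (fun I => (Finset.range (m + 1)).biUnion fun k => (T.descend_finite k I).toFinset)
    with hSdef
  have hmain_eq : ∑ I ∈ hΛfin.toFinset, ∑ k ∈ Finset.range (m + 1),
      ∑ J ∈ (T.descend_finite k I).toFinset, T.epsSq ρ xstar J =
      ∑ J ∈ Sfin, T.epsSq ρ xstar J := by
    rw [hSdef, Finset.sum_biUnion]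
    · refine Finset.sum_congr rfl fun I _ => ?_
      rw [Finset.sum_biUnion]
      intro k hk k' hk' hne
      refine Finset.disjoint_left.mpr fun J hJ hJ' => ?_
      rw [Set.Finite.mem_toFinset] at hJ hJ'
      have := T.mem_descend_depth hJ
      have := T.mem_descend_depth hJ'
      exact hne (by omega)
    · intro I hI I' hI' hne
      simp only [Finset.mem_coe, Set.Finite.mem_toFinset] at hI hI'
      refine Finset.disjoint_left.mpr fun J hJ hJ' => ?_
      simp only [Finset.mem_biUnion, Set.Finite.mem_toFinset] at hJ hJ'
      obtain ⟨k, -, hJk⟩ := hJ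
      obtain ⟨k', -, hJk'⟩ := hJ'
      exact T.descend_leaf_disjoint hTsub hI hI' hne hJk hJk'
  -- membership properties of Sfin
  have hSmem : ∀ J ∈ Sfin, T.epsSq ρ xstar J < η ^ 2 := by
    intro J hJ
    rw [hSdef, Finset.mem_biUnion] at hJ
    obtain ⟨I, hI, hJ⟩ := hJ
    rw [Finset.mem_biUnion] at hJ
    obtain ⟨k, -, hJk⟩ := hJ
    rw [Set.Finite.mem_toFinset] at hJk
    exact hsmall (Set.Finite.mem_toFinset _ |>.mp hI) hJk
  -- fiberwise bound
  set d : ℕ := Sfin.sup T.depth with hddef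
  have hfiber : ∑ J ∈ Sfin, T.epsSq ρ xstar J ≤
      ∑ j ∈ Finset.range (d + 1), min G (C₂ ^ 2 * r ^ j) := by
    rw [← Finset.sum_fiberwise_of_maps_to (g := T.depth)
      (fun J hJ => Finset.mem_range.mpr (Nat.lt_succ_of_le (Finset.le_sup hJ)))]
    refine Finset.sum_le_sum fun j _ => ?_
    set F' : Finset T.Cell := Sfin.filter fun J => T.depth J = j with hF'def
    have hF'dep : ∀ J ∈ F', T.depth J = j := fun J hJ => (Finset.mem_filter.mp hJ).2
    have hF'mass : ∑ J ∈ F', (ρ (T.cset J)).toReal ≤ 1 :=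
      T.sum_measure_le_one (T.pairwise_disjoint_level hF'dep)
    refine le_min ?_ ?_
    · calc ∑ J ∈ F', T.epsSq ρ xstar J
          ≤ ∑ J ∈ F', G * (ρ (T.cset J)).toReal := by
            refine Finset.sum_le_sum fun J hJ => ?_
            have h1 : T.epsSq ρ xstar J ≤
                min (η ^ 2) ((C₁ * (ρ (T.cset J)).toReal ^ s) ^ 2 * (ρ (T.cset J)).toReal) :=
              le_min (hSmem J (Finset.mem_filter.mp hJ).1).le
                ((T.epsSq_le_cellErr J).trans (bound1 J))
            exact h1.trans (by rw [hGdef]; exact min_interp hC₁ hs hη (hρ0 J))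
      _ = G * ∑ J ∈ F', (ρ (T.cset J)).toReal := by rw [Finset.mul_sum]
      _ ≤ G * 1 := mul_le_mul_of_nonneg_left hF'mass hG0.le
      _ = G := mul_one _
    · calc ∑ J ∈ F', T.epsSq ρ xstar J
          ≤ ∑ J ∈ F', C₂ ^ 2 * r ^ j * (ρ (T.cset J)).toReal := by
            refine Finset.sum_le_sum fun J hJ => ?_
            refine (T.epsSq_le_cellErr J).trans ((bound2 J).trans ?_)
            rw [hF'dep J hJ]
      _ = C₂ ^ 2 * r ^ j * ∑ J ∈ F', (ρ (T.cset J)).toReal := by rw [Finset.mul_sum]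
      _ ≤ C₂ ^ 2 * r ^ j * 1 := mul_le_mul_of_nonneg_left hF'mass (by positivity)
      _ = C₂ ^ 2 * r ^ j := mul_one _
  -- final assembly
  have hgeom : ∑ j ∈ Finset.range (d + 1), min G (C₂ ^ 2 * r ^ j) ≤
      ((N : ℝ) + 1) * G + C₂ ^ 2 * (r ^ (N + 1) / (1 - r)) := by
    exact sum_min_le_geom hG0.le (by positivity : (0:ℝ) ≤ C₂ ^ 2) hr0 hr1 N d
  calc (∫ x, ‖x - T.proj (T.center ρ xstar) Λ x‖ ^ 2 ∂ρ)
      = ∑ I ∈ hΛfin.toFinset, T.cellErr ρ xstar I := hIdentity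
  _ = _ + _ := htel
  _ ≤ (((N : ℝ) + 1) * G + C₂ ^ 2 * (r ^ (N + 1) / (1 - r))) + G := by
      have h1 := hmain_eq ▸ (hfiber.trans hgeom)
      exact add_le_add (hmain_eq ▸ (hfiber.trans hgeom)) hrem
  _ = ((N : ℝ) + 2) * G + C₂ ^ 2 * (r ^ (N + 1) / (1 - r)) := by ring


lemma ediam_le_diam {s : Set (Euc D)} (ρ : Measure (Euc D)) : ediam ρ s ≤ Metric.diam s := by
  rw [ediam]
  refine le_trans (ciInf_le ⟨0, ?_⟩ ⟨∅, MeasurableSet.empty, empty_subset _, measure_empty⟩) ?_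
  · rintro x ⟨J, rfl⟩
    exact Metric.diam_nonneg
  · rw [diff_empty]

lemma trivial_bound [IsProbabilityMeasure ρ] (hXc : ρ Xᶜ = 0) (h0X : (0 : Euc D) ∈ X)
    (hXb : Bornology.IsBounded X) (hXd : Metric.diam X ≤ 1) (hxsX : ∀ I, xstar I ∈ X)
    (hA : AssumptionA T ρ b s C₁ C₂) (hb : 1 < b) (hs : 0 < s) (hC₁ : 0 < C₁) (hC₂ : 0 < C₂)
    {η : ℝ} (hη : 0 < η) :
    (∫ x, ‖x - T.proj (T.center ρ xstar) (T.outerLeaves (T.Teta ρ xstar η)) x‖ ^ 2 ∂ρ) ≤ 1 := by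
  have hb0 : (0:ℝ) < b := lt_trans one_pos hb
  set r : ℝ := (b ^ 2)⁻¹ with hrdef
  have hb2 : (1:ℝ) < b ^ 2 := one_lt_pow₀ hb (by norm_num)
  have hr0 : 0 ≤ r := by positivity
  have hr1 : r < 1 := by
    rw [hrdef, inv_lt_one_iff₀]
    right
    exact hb2
  have hae : ∀ᵐ x ∂ρ, ‖x‖ ≤ 1 :=
    (ae_mem_X hXc).mono fun x hx => mem_X_norm_le h0X hXb hXd hx
  have hxs : ∀ I, ‖xstar I‖ ≤ 1 := fun I => mem_X_norm_le h0X hXb hXd (hxsX I)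
  have hcnorm : ∀ I, ‖T.center ρ xstar I‖ ≤ 1 := T.norm_center_le hae hxs
  have hρ1 : ∀ I : T.Cell, (ρ (T.cset I)).toReal ≤ 1 := by
    intro I
    calc (ρ (T.cset I)).toReal ≤ (1 : ℝ≥0∞).toReal :=
      ENNReal.toReal_mono ENNReal.one_ne_top prob_le_one
    _ = 1 := by simp
  have hρ0 : ∀ I : T.Cell, 0 ≤ (ρ (T.cset I)).toReal := fun I => ENNReal.toReal_nonneg
  have bound2 : ∀ J : T.Cell,
      T.cellErr ρ xstar J ≤ C₂ ^ 2 * r ^ (T.depth J) * (ρ (T.cset J)).toReal := by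
    intro J
    calc T.cellErr ρ xstar J ≤ (ediam ρ (T.cset J)) ^ 2 * (ρ (T.cset J)).toReal :=
      T.cellErr_le_ediam_sq hae hxs hXb J
    _ ≤ (C₂ * b ^ (-(T.depth J : ℝ))) ^ 2 * (ρ (T.cset J)).toReal := by
        refine mul_le_mul_of_nonneg_right ?_ (hρ0 J)
        exact pow_le_pow_left₀ (ediam_nonneg ρ _) (hA J).2 2
    _ = C₂ ^ 2 * r ^ (T.depth J) * (ρ (T.cset J)).toReal := by
        rw [mul_pow, neg_rpow_sq hb0, hrdef]
  obtain ⟨j₀, hj₀⟩ : ∃ j₀, ∀ I, η ≤ T.eps ρ xstar I → T.depth I ≤ j₀ := by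
    obtain ⟨n, hn⟩ := pow_unbounded_of_one_lt (C₂ / η) hb
    refine ⟨n, fun I hIη => ?_⟩
    have h1 : η ^ 2 ≤ T.cellErr ρ xstar I :=
      (T.eps_sq_le hae hxs hIη hη.le).trans (T.epsSq_le_cellErr I)
    have h2 : T.cellErr ρ xstar I ≤ C₂ ^ 2 * r ^ (T.depth I) := by
      calc T.cellErr ρ xstar I ≤ C₂ ^ 2 * r ^ (T.depth I) * (ρ (T.cset I)).toReal := bound2 I
      _ ≤ C₂ ^ 2 * r ^ (T.depth I) * 1 :=
          mul_le_mul_of_nonneg_left (hρ1 I) (by positivity)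
      _ = _ := mul_one _
    set j := T.depth I
    have hb2j : (0:ℝ) < (b ^ 2) ^ j := by positivity
    have h3 : η ^ 2 * (b ^ 2) ^ j ≤ C₂ ^ 2 := by
      have h4 : η ^ 2 * (b ^ 2) ^ j ≤ C₂ ^ 2 * r ^ j * (b ^ 2) ^ j :=
        mul_le_mul_of_nonneg_right (h1.trans h2) hb2j.le
      have h5 : r ^ j * (b ^ 2) ^ j = 1 := by
        rw [hrdef, ← mul_pow, inv_mul_cancel₀ (by positivity), one_pow]
      calc η ^ 2 * (b ^ 2) ^ j ≤ C₂ ^ 2 * r ^ j * (b ^ 2) ^ j := h4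
      _ = C₂ ^ 2 * (r ^ j * (b ^ 2) ^ j) := by ring
      _ = C₂ ^ 2 := by rw [h5, mul_one]
    have h6 : (η * b ^ j) ^ 2 ≤ C₂ ^ 2 := by
      calc (η * b ^ j) ^ 2 = η ^ 2 * (b ^ 2) ^ j := by rw [mul_pow, ← pow_mul, ← pow_mul,
        Nat.mul_comm]
      _ ≤ C₂ ^ 2 := h3
    have h7 : η * b ^ j ≤ C₂ :=
      le_of_pow_le_pow_left₀ (by norm_num) hC₂.le h6
    have h8 : (b:ℝ) ^ j ≤ C₂ / η := by
      rw [le_div_iff₀ hη]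
      linarith [h7]
    exact le_of_lt ((pow_lt_pow_iff_right₀ hb).mp (lt_of_le_of_lt h8 hn))
  have hTsub : T.IsSubtree (T.Teta ρ xstar η) := T.isSubtree_Teta ρ xstar
  have hTfin : (T.Teta ρ xstar η).Finite := T.Teta_finite ρ xstar hj₀
  have hroot : T.root ∈ T.Teta ρ xstar η := T.root_mem_Teta ρ xstar
  set Λ : Set T.Cell := T.outerLeaves (T.Teta ρ xstar η) with hΛdef
  have hΛfin : Λ.Finite := T.outerLeaves_finite hTfin
  have hdisΛ : Λ.Pairwise (Function.onFun Disjoint fun I => T.cset I) := fun I hI J hJ hne =>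
    T.outerLeaves_disjoint hTsub hI hJ hne
  have hcov : X ⊆ ⋃ I ∈ Λ, T.cset I := by
    intro x hx
    obtain ⟨I, hI, hxI⟩ := T.exists_outerLeaf_mem hTsub hTfin hroot hx
    exact mem_biUnion hI hxI
  have hIdentity : (∫ x, ‖x - T.proj (T.center ρ xstar) Λ x‖ ^ 2 ∂ρ) =
      ∑ I ∈ hΛfin.toFinset, T.cellErr ρ xstar I :=
    T.integral_proj_eq_sum hXc hae hΛfin hdisΛ hcnorm hcov
  rw [hIdentity]
  calc ∑ I ∈ hΛfin.toFinset, T.cellErr ρ xstar I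
      ≤ ∑ I ∈ hΛfin.toFinset, (ρ (T.cset I)).toReal := by
        refine Finset.sum_le_sum fun I _ => ?_
        calc T.cellErr ρ xstar I ≤ (ediam ρ (T.cset I)) ^ 2 * (ρ (T.cset I)).toReal :=
          T.cellErr_le_ediam_sq hae hxs hXb I
        _ ≤ 1 ^ 2 * (ρ (T.cset I)).toReal := by
            refine mul_le_mul_of_nonneg_right ?_ (hρ0 I)
            refine pow_le_pow_left₀ (ediam_nonneg ρ _) ?_ 2
            exact (ediam_le_diam ρ).trans
              ((Metric.diam_mono (T.cset_subset_X I) hXb).trans hXd)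
        _ = (ρ (T.cset I)).toReal := by rw [one_pow, one_mul]
  _ ≤ 1 := T.sum_measure_le_one fun I hI J hJ hne => by
      simp only [Finset.mem_coe, Set.Finite.mem_toFinset] at hI hJ
      exact hdisΛ hI hJ hne

end PartitionTree


set_option maxHeartbeats 1000000 in
theorem stmt_8 (a : ℕ) (b s C₁ C₂ : ℝ) (ha : 1 ≤ a) (hb : 1 < b) (hs : 0 < s)
    (hC₁ : 0 < C₁) (hC₂ : 0 < C₂) (σ : ℝ) (hσ0 : 0 < σ) (hσs : σ < s) :
    ∃ cσ : ℝ, 0 < cσ ∧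
      ∀ (D : ℕ) (X : Set (Euc D)) (T : PartitionTree D X a)
        (ρ : Measure (Euc D)) (xstar : T.Cell → Euc D),
        IsProbabilityMeasure ρ → ρ Xᶜ = 0 → (0 : Euc D) ∈ X →
        Bornology.IsBounded X → Metric.diam X ≤ 1 → (∀ I, xstar I ∈ X) →
        AssumptionA T ρ b s C₁ C₂ →
        ∀ η : ℝ, 0 < η →
          (∫ x, ‖x - T.proj (T.center ρ xstar)
              (T.outerLeaves (T.Teta ρ xstar η)) x‖ ^ 2 ∂ρ) ≤
            cσ * η ^ ((4 * σ) / (2 * σ + 1)) := by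
  have hb0 : (0:ℝ) < b := lt_trans one_pos hb
  have hb2 : (1:ℝ) < b ^ 2 := one_lt_pow₀ hb (by norm_num)
  have hr1 : ((b ^ 2)⁻¹ : ℝ) < 1 := by
    rw [inv_lt_one_iff₀]
    right
    exact hb2
  have hr0 : (0:ℝ) ≤ (b ^ 2)⁻¹ := by positivity
  have h1r : (0:ℝ) < 1 - (b ^ 2)⁻¹ := by linarith
  set q : ℝ := 4 * σ / (2 * σ + 1) with hqdef
  set γ : ℝ := 4 * s / (2 * s + 1) with hγdef
  set δ : ℝ := γ - q with hδdef
  set A : ℝ := C₁ ^ (2 / (2 * s + 1)) with hAdef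
  have hq0 : 0 < q := by rw [hqdef]; positivity
  have hδ0 : 0 < δ := by
    rw [hδdef, hγdef, hqdef,
      show 4 * s / (2 * s + 1) - 4 * σ / (2 * σ + 1) =
        4 * (s - σ) / ((2 * s + 1) * (2 * σ + 1)) by field_simp; ring]
    have h1 : 0 < 4 * (s - σ) := by linarith
    have h2 : 0 < (2 * s + 1) * (2 * σ + 1) := by nlinarith
    positivity
  have hlogb : 0 < Real.log b := Real.log_pos hb
  have hA0 : 0 < A := by rw [hAdef]; positivity
  set K : ℝ := (q / (2 * δ * Real.log b) + 3) * A + C₂ ^ 2 / (1 - (b ^ 2)⁻¹) with hKdef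
  have hK0 : 0 < K := by
    rw [hKdef]
    have h1 : 0 < q / (2 * δ * Real.log b) + 3 := by positivity
    positivity
  refine ⟨max 1 K, lt_of_lt_of_le one_pos (le_max_left _ _), ?_⟩
  intro D X T ρ xstar hprob hXc h0X hXb hXd hxsX hAA η hη
  haveI := hprob
  rcases le_or_gt 1 η with hη1 | hη1
  · -- large η : use the trivial bound
    have h1 : (1:ℝ) ≤ η ^ q := Real.one_le_rpow hη1 hq0.le
    have h2 := PartitionTree.trivial_bound (T := T) hXc h0X hXb hXd hxsX hAA hb hs hC₁ hC₂ hη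
    refine h2.trans ?_
    have h3 : (1:ℝ) ≤ max 1 K := le_max_left _ _
    nlinarith
  · -- small η
    set L : ℝ := -Real.log η with hLdef
    have hL0 : 0 < L := by
      rw [hLdef, neg_pos]
      exact Real.log_neg hη hη1
    set N : ℕ := ⌈q * L / (2 * Real.log b)⌉₊ with hNdef
    have hmb := PartitionTree.main_bound (T := T) hXc h0X hXb hXd hxsX hAA hb hs hC₁ hC₂ hη N
    -- (a) : geometric tail is at most η^q
    have hrpow : ((b ^ 2)⁻¹ : ℝ) ^ (N + 1) ≤ η ^ q := by
      have h1 : ((b ^ 2)⁻¹ : ℝ) ^ (N + 1) =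
          Real.exp ((N + 1 : ℕ) * Real.log ((b ^ 2)⁻¹)) := by
        rw [← Real.log_pow, Real.exp_log (by positivity)]
      have h2 : η ^ q = Real.exp (q * Real.log η) := by
        rw [Real.rpow_def_of_pos hη, mul_comm]
      rw [h1, h2]
      apply Real.exp_le_exp.mpr
      have hlogr : Real.log ((b ^ 2)⁻¹ : ℝ) = -(2 * Real.log b) := by
        rw [Real.log_inv, Real.log_pow]
        push_cast
        ring
      rw [hlogr]
      have hceil : q * L / (2 * Real.log b) ≤ (N : ℝ) := Nat.le_ceil _
      have h3 : q * L ≤ (N : ℝ) * (2 * Real.log b) := by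
        rw [div_le_iff₀ (by positivity)] at hceil
        linarith
      have h4 : q * Real.log η = -(q * L) := by rw [hLdef]; ring
      rw [h4]
      push_cast
      nlinarith
    -- (b) : N + 2 ≤ (q/(2 δ log b) + 3) η^(-δ)
    have hloglt : L ≤ η ^ (-δ) / δ := by
      have h1 := log_le_rpow_div (x := 1 / η) (by positivity) hδ0
      have h2 : Real.log (1 / η) = L := by rw [hLdef, one_div, Real.log_inv]
      have h3 : (1 / η) ^ δ = η ^ (-δ) := by
        rw [one_div, Real.inv_rpow hη.le, ← Real.rpow_neg hη.le]
      rw [h2, h3] at h1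
      exact h1
    have hηδ1 : 1 ≤ η ^ (-δ) :=
      Real.one_le_rpow_of_pos_of_le_one_of_nonpos hη hη1.le (by linarith)
    have hN2 : (N : ℝ) + 2 ≤ (q / (2 * δ * Real.log b) + 3) * η ^ (-δ) := by
      have hceil2 : (N : ℝ) < q * L / (2 * Real.log b) + 1 :=
        Nat.ceil_lt_add_one (by positivity)
      have hx : q * L / (2 * Real.log b) ≤ q / (2 * δ * Real.log b) * η ^ (-δ) := by
        rw [div_le_iff₀ (by positivity)]
        calc q * L ≤ q * (η ^ (-δ) / δ) := mul_le_mul_of_nonneg_left hloglt hq0.le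
        _ = q / (2 * δ * Real.log b) * η ^ (-δ) * (2 * Real.log b) := by
            field_simp
      have h3 : (3:ℝ) ≤ 3 * η ^ (-δ) := by nlinarith
      calc (N : ℝ) + 2 ≤ q * L / (2 * Real.log b) + 3 := by linarith
      _ ≤ q / (2 * δ * Real.log b) * η ^ (-δ) + 3 * η ^ (-δ) := by linarith
      _ = (q / (2 * δ * Real.log b) + 3) * η ^ (-δ) := by ring
    -- combine
    have hcomb : ((N : ℝ) + 2) * (A * η ^ γ) ≤ (q / (2 * δ * Real.log b) + 3) * A * η ^ q := by
      have hstep : ((N : ℝ) + 2) * (A * η ^ γ) ≤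
          ((q / (2 * δ * Real.log b) + 3) * η ^ (-δ)) * (A * η ^ γ) := by
        refine mul_le_mul_of_nonneg_right hN2 ?_
        positivity
      refine hstep.trans (le_of_eq ?_)
      rw [show ((q / (2 * δ * Real.log b) + 3) * η ^ (-δ)) * (A * η ^ γ) =
          (q / (2 * δ * Real.log b) + 3) * A * (η ^ (-δ) * η ^ γ) by ring,
        ← Real.rpow_add hη]
      congr 2
      rw [hδdef]
      ring
    have htail : C₂ ^ 2 * (((b ^ 2)⁻¹ : ℝ) ^ (N + 1) / (1 - (b ^ 2)⁻¹)) ≤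
        C₂ ^ 2 / (1 - (b ^ 2)⁻¹) * η ^ q := by
      rw [show C₂ ^ 2 * (((b ^ 2)⁻¹ : ℝ) ^ (N + 1) / (1 - (b ^ 2)⁻¹)) =
          C₂ ^ 2 / (1 - (b ^ 2)⁻¹) * ((b ^ 2)⁻¹ : ℝ) ^ (N + 1) by ring]
      exact mul_le_mul_of_nonneg_left hrpow (by positivity)
    have hKle : K * η ^ q ≤ max 1 K * η ^ q :=
      mul_le_mul_of_nonneg_right (le_max_right _ _) (by positivity)
    calc (∫ x, ‖x - T.proj (T.center ρ xstar)
          (T.outerLeaves (T.Teta ρ xstar η)) x‖ ^ 2 ∂ρ)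
        ≤ ((N : ℝ) + 2) * (A * η ^ γ) +
          C₂ ^ 2 * (((b ^ 2)⁻¹ : ℝ) ^ (N + 1) / (1 - (b ^ 2)⁻¹)) := hmb
    _ ≤ (q / (2 * δ * Real.log b) + 3) * A * η ^ q +
          C₂ ^ 2 / (1 - (b ^ 2)⁻¹) * η ^ q := add_le_add hcomb htail
    _ = K * η ^ q := by rw [hKdef]; ring
    _ ≤ max 1 K * η ^ q := hKle


end
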